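/- Fix a network (K, G) with K nonempty and a fading structure π such that every link is ON with positive probability, i.e. for every l ∈ K, Σ_{J⊆K : l∈J} π(J) > 0. Then σ*_G(π) ≥ 1 / d_I(G). -/

import Mathlib

open scoped BigOperators
open Filter MeasureTheory ProbabilityTheory

/-- `S` is an independent set of the interference graph `G` contained in the
set of links `J` (pairwise non-adjacent links). -/
def IsIndepIn {V : Type*} (G : SimpleGraph V) (J S : Finset V) : Prop :=
  S ⊆ J ∧ ∀ u ∈ S, ∀ v ∈ S, ¬ G.Adj u v

/-- `S` is a maximal independent set of `J`. -/
def IsMaxIndepIn {V : Type*} (G : SimpleGraph V) (J S : Finset V) : Prop :=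
  IsIndepIn G J S ∧ ∀ T, IsIndepIn G J T → S ⊆ T → S = T

/-- 0/1 indicator vector of a finite set of links. -/
def indVec {V : Type*} [DecidableEq V] (S : Finset V) : V → ℝ :=
  fun v => if v ∈ S then 1 else 0

/-- `M_{J,L}` : the (finite) set of 0/1 indicator vectors of the maximal independent
sets of `J`; the vectors are encoded in the ambient space `ℝ^V`, coordinates outside `J`
are automatically `0`. -/
def Mset {V : Type*} [DecidableEq V] (G : SimpleGraph V) (J : Finset V) : Set (V → ℝ) :=
  indVec '' {S | IsMaxIndepIn G J S}

/-- `CH(M_{J,L})` : the convex hull of `M_{J,L}`. -/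
noncomputable def CHM {V : Type*} [DecidableEq V] (G : SimpleGraph V) (J : Finset V) :
    Set (V → ℝ) :=
  convexHull ℝ (Mset G J)

/-- A fading structure `π` on the set of links: nonnegative weights summing to one. -/
def IsFading {V : Type*} [Fintype V] [DecidableEq V] (π : Finset V → ℝ) : Prop :=
  (∀ J, 0 ≤ π J) ∧ ∑ J : Finset V, π J = 1

/-- `Φ(L) = { Σ_{J ⊆ K} π(J) η_J : η_J ∈ CH(M_{J∩L,L}) }`. -/
def Phi {V : Type*} [Fintype V] [DecidableEq V] (G : SimpleGraph V) (π : Finset V → ℝ)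
    (L : Finset V) : Set (V → ℝ) :=
  {φ | ∃ η : Finset V → V → ℝ, (∀ J, η J ∈ CHM G (J ∩ L)) ∧
    φ = ∑ J : Finset V, π J • η J}

/-- The fading local pooling factor `σ*_L(π)` of a set of links `L`. -/
noncomputable def sigmaL {V : Type*} [Fintype V] [DecidableEq V] (G : SimpleGraph V)
    (π : Finset V → ℝ) (L : Finset V) : ℝ :=
  sInf {σ : ℝ | 0 ≤ σ ∧ ∃ φ1 ∈ Phi G π L, ∃ φ2 ∈ Phi G π L, ∀ v ∈ L, φ2 v ≤ σ * φ1 v}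

/-- The Fading-LPF `σ*_G(π)` of the network: minimum of `σ*_L(π)` over nonempty `L ⊆ K`. -/
noncomputable def sigmaG {V : Type*} [Fintype V] [DecidableEq V] (G : SimpleGraph V)
    (π : Finset V → ℝ) : ℝ :=
  sInf (sigmaL G π '' {L : Finset V | L.Nonempty})
/-- The marginal distribution `π_L` induced on a subset of links `L`. -/
noncomputable def marginal {V : Type*} [Fintype V] [DecidableEq V] (π : Finset V → ℝ)
    (L J : Finset V) : ℝ :=
  ∑ I : Finset V, if I ∩ L = J then π I else 0

/-- `n(M_J)`: minimum cardinality of a maximal independent set of `J`. -/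
noncomputable def nM {V : Type*} (G : SimpleGraph V) (J : Finset V) : ℕ :=
  sInf (Finset.card '' {S | IsMaxIndepIn G J S})

/-- `N(M_J)`: maximum cardinality of a maximal independent set of `J`. -/
noncomputable def NM {V : Type*} (G : SimpleGraph V) (J : Finset V) : ℕ :=
  sSup (Finset.card '' {S | IsMaxIndepIn G J S})

/-- interference degree of a link `l`: maximum cardinality of an independent set of `G`
contained in the closed neighborhood of `l`. -/
noncomputable def dI {V : Type*} (G : SimpleGraph V) (l : V) : ℕ :=
  sSup (Finset.card '' {S : Finset V | (∀ u ∈ S, ∀ v ∈ S, ¬ G.Adj u v) ∧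
    ∀ v ∈ S, v = l ∨ G.Adj l v})

/-- interference degree `d_I(G)` of the whole interference graph. -/
noncomputable def dIG {V : Type*} (G : SimpleGraph V) : ℕ :=
  sSup (Set.range (dI G))

/-- interference degree `d_I(S)` of the subgraph of `G` induced on the set of links `S`. -/
noncomputable def dISet {V : Type*} (G : SimpleGraph V) (Sset : Finset V) : ℕ :=
  sSup (Finset.card '' {T : Finset V | T ⊆ Sset ∧ (∀ u ∈ T, ∀ v ∈ T, ¬ G.Adj u v) ∧
    ∃ l ∈ Sset, ∀ v ∈ T, v = l ∨ G.Adj l v})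

/-- The throughput region `Λ_f`. -/
def LambdaF {V : Type*} [Fintype V] [DecidableEq V] (G : SimpleGraph V) (π : Finset V → ℝ) :
    Set (V → ℝ) :=
  {lam | (∀ v, 0 < lam v) ∧ ∃ η : Finset V → V → ℝ,
    (∀ J, η J ∈ CHM G J) ∧ ∀ v, lam v ≤ ∑ J : Finset V, π J * η J v}

/-- The scaled region `Λ_f(x)`. -/
def LambdaX {V : Type*} [Fintype V] [DecidableEq V] (G : SimpleGraph V) (π : Finset V → ℝ)
    (x : Finset V → ℝ) : Set (V → ℝ) :=
  {lam | (∀ v, 0 < lam v) ∧ ∃ η : Finset V → V → ℝ,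
    (∀ J, η J ∈ CHM G J) ∧ ∀ v, lam v ≤ ∑ J : Finset V, x J * π J * η J v}

/-- The standard (non-fading) local pooling factor of a graph `H`. -/
noncomputable def stdLPF (W : Type*) [Fintype W] [DecidableEq W] (H : SimpleGraph W) : ℝ :=
  sInf ((fun L => sInf {σ : ℝ | 0 ≤ σ ∧ ∃ φ1 ∈ CHM H L, ∃ φ2 ∈ CHM H L,
    ∀ v ∈ L, φ2 v ≤ σ * φ1 v}) '' {L : Finset W | L.Nonempty})

/-- discrete measurable structure on global channel states -/
instance {α : Type*} : MeasurableSpace (Finset α) := ⊤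

/-- The queue-length process `Q` evolves according to
`Q_l[t+1] = (Q_l[t] − C_l[t]·1{l ∈ S[t]})⁺ + A_l[t]`, `Q_l[0] = 0`,
where `GS t ω` is the set of 'ON' links and `S t ω` is the schedule. -/
def QueueEvol {V : Type*} [DecidableEq V] {Ω : Type*} (A : ℕ → V → Ω → ℕ)
    (GS S : ℕ → Ω → Finset V) (Q : ℕ → V → Ω → ℕ) : Prop :=
  (∀ l ω, Q 0 l ω = 0) ∧
  ∀ t l ω, Q (t + 1) l ω =
    (Q t l ω - (if l ∈ GS t ω ∧ l ∈ S t ω then 1 else 0)) + A t l ω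

/-- `S` is a greedy maximal schedule for the weights `w`: a maximal independent set of `G`
with an enumeration `s_0, …, s_{k-1}` such that each `s_i` has maximal weight among the
links neither equal nor adjacent to any of `s_0, …, s_{i-1}`. -/
def IsGreedySchedule {V : Type*} [Fintype V] [DecidableEq V] (G : SimpleGraph V)
    (w : V → ℝ) (S : Finset V) : Prop :=
  IsMaxIndepIn G Finset.univ S ∧
  ∃ s : ℕ → V, S = (Finset.range S.card).image s ∧
    (∀ i < S.card, ∀ j < S.card, s i = s j → i = j) ∧
    ∀ i < S.card, ∀ v : V, (∀ j < i, v ≠ s j ∧ ¬ G.Adj v (s j)) → w v ≤ w (s i)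

/-- A GMS policy: at every time and in every sample point, the schedule is a greedy
maximal schedule for the weights `w_l = Q_l[t]·C_l[t]`. -/
def IsGMSPolicy {V : Type*} [Fintype V] [DecidableEq V] {Ω : Type*} (G : SimpleGraph V)
    (GS S : ℕ → Ω → Finset V) (Q : ℕ → V → Ω → ℕ) : Prop :=
  ∀ t ω, IsGreedySchedule G
    (fun l => (Q t l ω : ℝ) * (if l ∈ GS t ω then 1 else 0)) (S t ω)

section AuxFLPF

variable {V : Type*} [Fintype V] [DecidableEq V]

open Classical in
/-- closed neighborhood of `s` as a finset -/
noncomputable def nbhdF (G : SimpleGraph V) (s : V) : Finset V :=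
  Finset.univ.filter (fun v => v = s ∨ G.Adj s v)

lemma dI_set_bddAbove (G : SimpleGraph V) (l : V) :
    BddAbove (Finset.card '' {S : Finset V | (∀ u ∈ S, ∀ v ∈ S, ¬ G.Adj u v) ∧
      ∀ v ∈ S, v = l ∨ G.Adj l v}) := by
  refine ⟨Fintype.card V, ?_⟩
  rintro n ⟨S, _, rfl⟩
  exact Finset.card_le_univ S

lemma card_le_dI (G : SimpleGraph V) (l : V) (S : Finset V)
    (h1 : ∀ u ∈ S, ∀ v ∈ S, ¬ G.Adj u v) (h2 : ∀ v ∈ S, v = l ∨ G.Adj l v) :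
    S.card ≤ dI G l :=
  le_csSup (dI_set_bddAbove G l) ⟨S, ⟨h1, h2⟩, rfl⟩

lemma one_le_dI (G : SimpleGraph V) (l : V) : 1 ≤ dI G l := by
  have := card_le_dI G l {l} (by
    intro u hu v hv
    simp only [Finset.mem_singleton] at hu hv
    subst hu; subst hv; exact G.irrefl) (by
    intro v hv
    simp only [Finset.mem_singleton] at hv
    exact Or.inl hv)
  simpa using this

lemma dI_le_dIG (G : SimpleGraph V) (l : V) : dI G l ≤ dIG G :=
  le_csSup (Set.finite_range (dI G)).bddAbove ⟨l, rfl⟩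

lemma one_le_dIG [Nonempty V] (G : SimpleGraph V) : 1 ≤ dIG G := by
  obtain ⟨l⟩ := ‹Nonempty V›
  exact le_trans (one_le_dI G l) (dI_le_dIG G l)

/-- Any independent set of `A` has cardinality at most `dIG G` times the cardinality
of any maximal independent set of `A`. -/
lemma indep_card_le (G : SimpleGraph V) (A S T : Finset V)
    (hS : IsMaxIndepIn G A S) (hT : IsIndepIn G A T) :
    T.card ≤ dIG G * S.card := by
  classical
  have hcover : T ⊆ S.biUnion (fun s => T ∩ nbhdF G s) := by
    intro t ht
    obtain ⟨s, hs, h⟩ : ∃ s ∈ S, t = s ∨ G.Adj s t := by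
      by_cases hts : t ∈ S
      · exact ⟨t, hts, Or.inl rfl⟩
      · by_contra hcon
        push_neg at hcon
        have hins : IsIndepIn G A (insert t S) := by
          constructor
          · intro x hx
            rcases Finset.mem_insert.mp hx with rfl | hx
            · exact hT.1 ht
            · exact hS.1.1 hx
          · intro u hu v hv
            rcases Finset.mem_insert.mp hu with hu' | hu' <;>
              rcases Finset.mem_insert.mp hv with hv' | hv'
            · subst hu'; subst hv'; exact G.irrefl
            · subst hu'; intro h; exact (hcon v hv').2 (G.adj_symm h)
            · subst hv'; intro h; exact (hcon u hu').2 h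
            · exact hS.1.2 u hu' v hv'
        have heq := hS.2 _ hins (Finset.subset_insert t S)
        exact hts (heq ▸ Finset.mem_insert_self t S)
    refine Finset.mem_biUnion.mpr ⟨s, hs, Finset.mem_inter.mpr ⟨ht, ?_⟩⟩
    simp only [nbhdF, Finset.mem_filter, Finset.mem_univ, true_and]
    exact h
  calc T.card ≤ (S.biUnion (fun s => T ∩ nbhdF G s)).card := Finset.card_le_card hcover
    _ ≤ ∑ s ∈ S, (T ∩ nbhdF G s).card := Finset.card_biUnion_le
    _ ≤ ∑ s ∈ S, dIG G := by
        refine Finset.sum_le_sum (fun s _ => ?_)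
        refine le_trans (card_le_dI G s _ ?_ ?_) (dI_le_dIG G s)
        · intro u hu v hv
          exact hT.2 u (Finset.mem_inter.mp hu).1 v (Finset.mem_inter.mp hv).1
        · intro v hv
          have := (Finset.mem_inter.mp hv).2
          simpa only [nbhdF, Finset.mem_filter, Finset.mem_univ, true_and] using this
    _ = dIG G * S.card := by rw [Finset.sum_const, smul_eq_mul, mul_comm]

/-- Every finset has a maximal independent subset. -/
lemma exists_maxIndepIn (G : SimpleGraph V) (A : Finset V) :
    ∃ S, IsMaxIndepIn G A S := by
  classical
  set 𝒮 : Finset (Finset V) := A.powerset.filter (fun S => IsIndepIn G A S) with h𝒮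
  have hne : 𝒮.Nonempty := by
    refine ⟨∅, Finset.mem_filter.mpr ⟨Finset.mem_powerset.mpr (Finset.empty_subset A), ?_⟩⟩
    exact ⟨Finset.empty_subset A, by intro u hu; simp at hu⟩
  obtain ⟨S, hSmem, hSmax⟩ := Finset.exists_max_image 𝒮 Finset.card hne
  have hSind : IsIndepIn G A S := (Finset.mem_filter.mp hSmem).2
  refine ⟨S, hSind, fun T hT hST => ?_⟩
  have hTmem : T ∈ 𝒮 :=
    Finset.mem_filter.mpr ⟨Finset.mem_powerset.mpr hT.1, hT⟩
  exact Finset.eq_of_subset_of_card_le hST (hSmax T hTmem)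

/-- the linear functional summing the coordinates over `L` -/
noncomputable def sumL (L : Finset V) (x : V → ℝ) : ℝ := ∑ v ∈ L, x v

lemma sumL_linear (L : Finset V) : IsLinearMap ℝ (sumL L) := by
  constructor
  · intro a b; simp [sumL, Finset.sum_add_distrib]
  · intro c a; simp [sumL, Finset.mul_sum]

lemma sumL_indVec {L S : Finset V} (h : S ⊆ L) : sumL L (indVec S) = S.card := by
  classical
  simp only [sumL, indVec]
  rw [Finset.sum_boole, Finset.filter_mem_eq_inter, Finset.inter_eq_right.mpr h]

lemma hull_sum_nonneg (G : SimpleGraph V) (A L : Finset V) {x : V → ℝ}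
    (hx : x ∈ CHM G A) : 0 ≤ sumL L x := by
  refine convexHull_min ?_ (convex_halfSpace_ge (sumL_linear L) 0) hx
  rintro _ ⟨S, _, rfl⟩
  show (0:ℝ) ≤ sumL L (indVec S)
  refine Finset.sum_nonneg (fun v _ => ?_)
  simp only [indVec]
  split <;> norm_num

lemma hull_one_le_sum (G : SimpleGraph V) {A L : Finset V} (hA : A.Nonempty) (hAL : A ⊆ L)
    {x : V → ℝ} (hx : x ∈ CHM G A) : 1 ≤ sumL L x := by
  refine convexHull_min ?_ (convex_halfSpace_ge (sumL_linear L) 1) hx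
  rintro _ ⟨S, hS, rfl⟩
  have hSL : S ⊆ L := hS.1.1.trans hAL
  show (1:ℝ) ≤ sumL L (indVec S)
  rw [sumL_indVec hSL]
  have hSne : S.Nonempty := by
    rcases Finset.eq_empty_or_nonempty S with rfl | h
    · obtain ⟨a, ha⟩ := hA
      have hsingle : IsIndepIn G A {a} := by
        refine ⟨Finset.singleton_subset_iff.mpr ha, ?_⟩
        intro u hu v hv
        simp only [Finset.mem_singleton] at hu hv
        subst hu; subst hv; exact G.irrefl
      have := hS.2 {a} hsingle (Finset.empty_subset _)
      exact absurd this.symm (Finset.singleton_ne_empty a)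
    · exact h
  exact_mod_cast Finset.one_le_card.mpr hSne

lemma hull_sum_le (G : SimpleGraph V) {A L : Finset V} (hAL : A ⊆ L)
    {x y : V → ℝ} (hx : x ∈ CHM G A) (hy : y ∈ CHM G A) :
    sumL L x ≤ (dIG G : ℝ) * sumL L y := by
  have lin2 : IsLinearMap ℝ (fun w => (dIG G : ℝ) * sumL L w) := by
    constructor
    · intro a b; rw [(sumL_linear L).map_add]; ring
    · intro c a; rw [(sumL_linear L).map_smul]; simp [smul_eq_mul]; ring
  have step1 : ∀ S1 : Finset V, IsMaxIndepIn G A S1 →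
      (S1.card : ℝ) ≤ (dIG G : ℝ) * sumL L y := by
    intro S1 hS1
    refine convexHull_min ?_ (convex_halfSpace_ge lin2 (S1.card : ℝ)) hy
    rintro _ ⟨S2, hS2, rfl⟩
    have hS2L : S2 ⊆ L := hS2.1.1.trans hAL
    show (S1.card : ℝ) ≤ (dIG G : ℝ) * sumL L (indVec S2)
    rw [sumL_indVec hS2L]
    have := indep_card_le G A S2 S1 hS2 hS1.1
    exact_mod_cast this
  refine convexHull_min ?_ (convex_halfSpace_le (sumL_linear L) ((dIG G : ℝ) * sumL L y)) hx
  rintro _ ⟨S1, hS1, rfl⟩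
  have hS1L : S1 ⊆ L := hS1.1.1.trans hAL
  show sumL L (indVec S1) ≤ (dIG G : ℝ) * sumL L y
  rw [sumL_indVec hS1L]
  exact step1 S1 hS1

lemma sumL_phi (L : Finset V) (π : Finset V → ℝ) (η : Finset V → V → ℝ) :
    sumL L (∑ J : Finset V, π J • η J) = ∑ J : Finset V, π J * sumL L (η J) := by
  simp only [sumL, Finset.sum_apply, Pi.smul_apply, smul_eq_mul]
  rw [Finset.sum_comm]
  simp [Finset.mul_sum]

end AuxFLPF

/-- **Corollary 1.** If every link is 'ON' with positive probability, then
`σ*_G(π) ≥ 1 / d_I(G)`. -/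
theorem flpf_ge_inv_interference_degree {V : Type*} [Fintype V] [DecidableEq V] [Nonempty V]
    (G : SimpleGraph V) (π : Finset V → ℝ) (hπ : IsFading π)
    (hON : ∀ l : V, 0 < ∑ J ∈ Finset.univ.filter (fun J : Finset V => l ∈ J), π J) :
    1 / (dIG G : ℝ) ≤ sigmaG G π := by
  classical
  have hd1 : (1 : ℝ) ≤ (dIG G : ℝ) := by exact_mod_cast one_le_dIG G
  have hd0 : (0 : ℝ) < (dIG G : ℝ) := lt_of_lt_of_le one_pos hd1
  unfold sigmaG
  apply le_csInf
  · exact ⟨sigmaL G π Finset.univ, ⟨Finset.univ, Finset.univ_nonempty, rfl⟩⟩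
  rintro b ⟨L, hL, rfl⟩
  unfold sigmaL
  apply le_csInf
  · -- the defining set contains 1
    refine ⟨1, zero_le_one, ?_⟩
    have hη : ∀ J : Finset V, ∃ x, x ∈ CHM G (J ∩ L) := by
      intro J
      obtain ⟨S, hS⟩ := exists_maxIndepIn G (J ∩ L)
      exact ⟨indVec S, subset_convexHull ℝ _ ⟨S, hS, rfl⟩⟩
    choose η hηmem using hη
    refine ⟨∑ J : Finset V, π J • η J, ⟨η, hηmem, rfl⟩,
      ∑ J : Finset V, π J • η J, ⟨η, hηmem, rfl⟩, fun v _ => ?_⟩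
    rw [one_mul]
  rintro σ ⟨hσ0, φ1, ⟨η1, hη1, rfl⟩, φ2, ⟨η2, hη2, rfl⟩, hle⟩
  obtain ⟨l0, hl0⟩ := hL
  set φ1 := ∑ J : Finset V, π J • η1 J with hφ1
  set φ2 := ∑ J : Finset V, π J • η2 J with hφ2
  have key : ∀ J : Finset V, sumL L (η1 J) ≤ (dIG G : ℝ) * sumL L (η2 J) :=
    fun J => hull_sum_le G (Finset.inter_subset_right) (hη1 J) (hη2 J)
  have h1 : sumL L φ2 ≤ σ * sumL L φ1 := by
    simp only [sumL, Finset.mul_sum]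
    exact Finset.sum_le_sum (fun v hv => hle v hv)
  have h2 : sumL L φ1 ≤ (dIG G : ℝ) * sumL L φ2 := by
    rw [hφ1, hφ2, sumL_phi, sumL_phi, Finset.mul_sum]
    refine Finset.sum_le_sum (fun J _ => ?_)
    have := mul_le_mul_of_nonneg_left (key J) (hπ.1 J)
    linarith [this]
  have h3 : 0 < sumL L φ2 := by
    have hlow : ∑ J ∈ Finset.univ.filter (fun J : Finset V => l0 ∈ J), π J ≤ sumL L φ2 := by
      rw [hφ2, sumL_phi]
      rw [Finset.sum_filter]
      refine Finset.sum_le_sum (fun J _ => ?_)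
      by_cases hJ : l0 ∈ J
      · simp only [hJ, if_true]
        have hone : 1 ≤ sumL L (η2 J) :=
          hull_one_le_sum G ⟨l0, Finset.mem_inter.mpr ⟨hJ, hl0⟩⟩
            (Finset.inter_subset_right) (hη2 J)
        nlinarith [hπ.1 J]
      · simp only [hJ, if_false]
        exact mul_nonneg (hπ.1 J) (hull_sum_nonneg G (J ∩ L) L (hη2 J))
    exact lt_of_lt_of_le (hON l0) hlow
  have hchain : sumL L φ2 ≤ σ * (dIG G : ℝ) * sumL L φ2 := by
    calc sumL L φ2 ≤ σ * sumL L φ1 := h1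
      _ ≤ σ * ((dIG G : ℝ) * sumL L φ2) := mul_le_mul_of_nonneg_left h2 hσ0
      _ = σ * (dIG G : ℝ) * sumL L φ2 := by ring
  have hσd : 1 ≤ σ * (dIG G : ℝ) := by nlinarith
  rw [div_le_iff₀ hd0]
  linarith
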